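/- Let S ⊆ ℝ^d be finite and shattered by closed axis-parallel cubes, and fix for each i extremal points l^i, u^i ∈ S attaining the coordinate minimum and maximum. Then the number k of points of S appearing exactly once among the 2d entries (l¹,u¹,…,l^d,u^d) satisfies k ≤ d + 1. -/

import Mathlib

/-- A collection `C` of subsets of `Ω` shatters a finite set `S` if every subset of `S`
is carved out by some member of `C`. -/
def Shatters {Ω : Type*} (C : Set (Set Ω)) (S : Finset Ω) : Prop :=
  ∀ A ⊆ S, ∃ c ∈ C, (S : Set Ω) ∩ c = (A : Set Ω)

/-- The collection of closed axis-parallel cubes in `ℝ^d`. -/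
def ClosedCubes (d : ℕ) : Set (Set (Fin d → ℝ)) :=
  {C | ∃ (a : Fin d → ℝ) (r : ℝ), 0 ≤ r ∧
    C = Set.univ.pi fun i => Set.Icc (a i) (a i + r)}


lemma unique_slot {d : ℕ} {l u : Fin d → (Fin d → ℝ)} {t : Fin d → ℝ}
    (h : (Finset.univ.filter fun p : Fin d × Bool =>
      (if p.2 then u p.1 else l p.1) = t).card = 1)
    {p q : Fin d × Bool} (hp : (if p.2 then u p.1 else l p.1) = t) (hpq : p ≠ q) :
    (if q.2 then u q.1 else l q.1) ≠ t := by
  intro hq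
  have hsub : ({p, q} : Finset (Fin d × Bool)) ⊆
      Finset.univ.filter fun p : Fin d × Bool => (if p.2 then u p.1 else l p.1) = t := by
    intro x hx
    simp only [Finset.mem_insert, Finset.mem_singleton] at hx
    rcases hx with rfl | rfl <;> simp [hp, hq]
  have := Finset.card_le_card hsub
  rw [h, Finset.card_pair hpq] at this
  omega

lemma key_lemma {d : ℕ} {S : Finset (Fin d → ℝ)}
    (hS : Shatters (ClosedCubes d) S)
    {l u : Fin d → (Fin d → ℝ)}
    (hl : ∀ i, l i ∈ S) (hu : ∀ i, u i ∈ S)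
    (hlmin : ∀ i, ∀ s ∈ S, l i i ≤ s i)
    (humax : ∀ i, ∀ s ∈ S, s i ≤ u i i)
    {i j : Fin d} (hij : i ≠ j)
    (hlj : (Finset.univ.filter fun p : Fin d × Bool =>
      (if p.2 then u p.1 else l p.1) = l j).card = 1)
    (huj : (Finset.univ.filter fun p : Fin d × Bool =>
      (if p.2 then u p.1 else l p.1) = u j).card = 1) :
    u i i - l i i < u j j - l j j := by
  -- distinctness facts
  have hplj : (if (j, false).2 then u (j, false).1 else l (j, false).1) = l j := by simp
  have hpuj : (if (j, true).2 then u (j, true).1 else l (j, true).1) = u j := by simp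
  have hlm_ne_lj : ∀ m : Fin d, m ≠ j → l m ≠ l j := fun m hm => by
    have := unique_slot hlj (q := (m, false)) hplj (by simp [Ne.symm hm])
    simpa using this
  have hum_ne_lj : ∀ m : Fin d, u m ≠ l j := fun m => by
    have := unique_slot hlj (q := (m, true)) hplj (by simp)
    simpa using this
  have hlm_ne_uj : ∀ m : Fin d, l m ≠ u j := fun m => by
    have := unique_slot huj (q := (m, false)) hpuj (by simp)
    simpa using this
  have hum_ne_uj : ∀ m : Fin d, m ≠ j → u m ≠ u j := fun m hm => by
    have := unique_slot huj (q := (m, true)) hpuj (by simp [Ne.symm hm])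
    simpa using this
  -- get a cube carving out S \ {l j, u j}
  obtain ⟨c, ⟨a, r, hr, rfl⟩, hC⟩ := hS (S \ {l j, u j}) (Finset.sdiff_subset)
  have hmem : ∀ x : Fin d → ℝ, x ∈ S →
      ((∀ m, a m ≤ x m ∧ x m ≤ a m + r) ↔ (x ≠ l j ∧ x ≠ u j)) := by
    intro x hx
    have := Set.ext_iff.mp hC x
    simp only [Set.mem_inter_iff, Finset.mem_coe, Finset.coe_sdiff, Set.mem_diff,
      Finset.coe_insert, Finset.coe_singleton, Set.mem_insert_iff, Set.mem_singleton_iff,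
      Set.mem_univ_pi, Set.mem_Icc, hx, true_and] at this
    rw [this]
    push_neg
    tauto
  -- l i and u i are in the cube
  have hliC := (hmem (l i) (hl i)).mpr ⟨hlm_ne_lj i hij, hlm_ne_uj i⟩
  have huiC := (hmem (u i) (hu i)).mpr ⟨hum_ne_lj i, hum_ne_uj i hij⟩
  have hrwi : u i i - l i i ≤ r := by
    have h1 := (hliC i).1
    have h2 := (huiC i).2
    linarith
  -- l j is excluded, necessarily in coordinate j, from below
  have hljout : ¬ (∀ m, a m ≤ l j m ∧ l j m ≤ a m + r) := by
    intro h
    exact ((hmem (l j) (hl j)).mp h).1 rfl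
  push_neg at hljout
  obtain ⟨m, hm⟩ := hljout
  have hmj : m = j := by
    by_contra hmj
    have hlmC := (hmem (l m) (hl m)).mpr ⟨hlm_ne_lj m hmj, hlm_ne_uj m⟩
    have humC := (hmem (u m) (hu m)).mpr ⟨hum_ne_lj m, hum_ne_uj m hmj⟩
    have h1 := (hlmC m).1
    have h2 := (humC m).2
    have h3 := hlmin m (l j) (hl j)
    have h4 := humax m (l j) (hl j)
    rcases lt_or_ge (l j m) (a m) with h5 | h5
    · linarith
    · have := hm h5; linarith
  rw [hmj] at hm
  have hlo : l j j < a j := by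
    rcases lt_or_ge (l j j) (a j) with h5 | h5
    · exact h5
    · have := hm h5
      have := hlmin j (l i) (hl i)
      have := (hliC j).2
      linarith
  -- u j is excluded, necessarily in coordinate j, from above
  have hujout : ¬ (∀ m, a m ≤ u j m ∧ u j m ≤ a m + r) := by
    intro h
    exact ((hmem (u j) (hu j)).mp h).2 rfl
  push_neg at hujout
  obtain ⟨m, hm'⟩ := hujout
  have hmj : m = j := by
    by_contra hmj
    have hlmC := (hmem (l m) (hl m)).mpr ⟨hlm_ne_lj m hmj, hlm_ne_uj m⟩
    have humC := (hmem (u m) (hu m)).mpr ⟨hum_ne_lj m, hum_ne_uj m hmj⟩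
    have h1 := (hlmC m).1
    have h2 := (humC m).2
    have h3 := hlmin m (u j) (hu j)
    have h4 := humax m (u j) (hu j)
    rcases lt_or_ge (u j m) (a m) with h5 | h5
    · linarith
    · have := hm' h5; linarith
  rw [hmj] at hm'
  have hhi : a j + r < u j j := by
    rcases lt_or_ge (u j j) (a j) with h5 | h5
    · have := humax j (u i) (hu i)
      have := (huiC j).1
      linarith
    · exact hm' h5
  linarith

/-- Let `S ⊆ ℝ^d` be finite and shattered by closed cubes, with extremal points `l i, u i ∈ S`
attaining the coordinate minimum and maximum in each coordinate `i`.  Then the number of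
points of `S` appearing exactly once among the `2d` entries `(l 1, u 1, …, l d, u d)` is at
most `d + 1`.  (Position `(i, false)` holds `l i`, position `(i, true)` holds `u i`.) -/
theorem card_appearing_once_le (d : ℕ) (S : Finset (Fin d → ℝ))
    (hS : Shatters (ClosedCubes d) S)
    (l u : Fin d → (Fin d → ℝ))
    (hl : ∀ i, l i ∈ S) (hu : ∀ i, u i ∈ S)
    (hlmin : ∀ i, ∀ s ∈ S, l i i ≤ s i)
    (humax : ∀ i, ∀ s ∈ S, s i ≤ u i i) :
    (S.filter fun s =>
        (Finset.univ.filter fun p : Fin d × Bool =>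
          (if p.2 then u p.1 else l p.1) = s).card = 1).card ≤ d + 1 := by
  classical
  by_contra hcon
  push_neg at hcon
  set e : Fin d × Bool → (Fin d → ℝ) := fun p => if p.2 then u p.1 else l p.1 with he
  set T : Finset (Fin d → ℝ) :=
    S.filter fun s => (Finset.univ.filter fun p : Fin d × Bool => e p = s).card = 1 with hT
  set P : Finset (Fin d × Bool) := Finset.univ.filter fun p => e p ∈ T with hP
  -- |T| = |P|
  have hPT : P.card = T.card := by
    have hbi : P = T.biUnion fun t => Finset.univ.filter fun p => e p = t := by
      ext p
      simp only [hP, Finset.mem_biUnion, Finset.mem_filter, Finset.mem_univ, true_and]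
      constructor
      · intro h; exact ⟨e p, h, rfl⟩
      · rintro ⟨t, ht, rfl⟩; exact ht
    rw [hbi, Finset.card_biUnion]
    · rw [Finset.sum_congr rfl fun t ht => (Finset.mem_filter.mp ht).2]
      simp
      rfl
    · intro t ht t' ht' htt'
      simp only [Finset.disjoint_left, Finset.mem_filter, Finset.mem_univ, true_and]
      intro p h1 h2
      exact htt' (h1 ▸ h2 ▸ rfl)
  -- full coordinates
  set F : Finset (Fin d) := Finset.univ.filter fun i => (i, false) ∈ P ∧ (i, true) ∈ P with hF
  have hfib : P.card = ∑ i : Fin d, (P.filter fun p => p.1 = i).card :=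
    Finset.card_eq_sum_card_fiberwise fun p _ => Finset.mem_univ p.1
  have hterm : ∀ i : Fin d, (P.filter fun p => p.1 = i).card ≤ if i ∈ F then 2 else 1 := by
    intro i
    by_cases hi : i ∈ F
    · rw [if_pos hi]
      have hsub : (P.filter fun p => p.1 = i) ⊆ {(i, false), (i, true)} := by
        intro p hp
        obtain ⟨p1, p2⟩ := p
        have := (Finset.mem_filter.mp hp).2
        simp only at this
        subst this
        cases p2 <;> simp
      calc (P.filter fun p => p.1 = i).card ≤ ({(i, false), (i, true)} : Finset _).card :=
            Finset.card_le_card hsub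
        _ ≤ 2 := by
            apply le_trans (Finset.card_insert_le _ _); simp
    · rw [if_neg hi]
      rw [Finset.card_le_one]
      intro p hp q hq
      obtain ⟨p1, p2⟩ := p
      obtain ⟨q1, q2⟩ := q
      simp only [Finset.mem_filter] at hp hq
      obtain ⟨hp1, hp2⟩ := hp
      obtain ⟨hq1, hq2⟩ := hq
      subst hp2; subst hq2
      cases p2 <;> cases q2
      · rfl
      · exact absurd (Finset.mem_filter.mpr ⟨Finset.mem_univ _, hp1, hq1⟩) hi
      · exact absurd (Finset.mem_filter.mpr ⟨Finset.mem_univ _, hq1, hp1⟩) hi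
      · rfl
  have hsum : ∑ i : Fin d, (if i ∈ F then 2 else 1) = d + F.card := by
    have : ∀ i : Fin d, (if i ∈ F then 2 else 1) = 1 + (if i ∈ F then 1 else 0) := by
      intro i; split <;> rfl
    rw [Finset.sum_congr rfl fun i _ => this i, Finset.sum_add_distrib]
    have : (∑ i : Fin d, if i ∈ F then (1:ℕ) else 0) = F.card := by
      rw [← Finset.card_filter]
      congr 1
      simp
    rw [this]
    simp [add_comm]
  have hPle : P.card ≤ d + F.card := by
    rw [hfib, ← hsum]
    exact Finset.sum_le_sum fun i _ => hterm i
  have hF2 : 2 ≤ F.card := by omega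
  obtain ⟨i, hi, j, hj, hij⟩ := Finset.one_lt_card.mp (by omega : 1 < F.card)
  simp only [hF, Finset.mem_filter, Finset.mem_univ, true_and, hP] at hi hj
  obtain ⟨hi1, hi2⟩ := hi
  obtain ⟨hj1, hj2⟩ := hj
  simp only [hT, Finset.mem_filter] at hi1 hi2 hj1 hj2
  have hli := hi1.2
  have hui := hi2.2
  have hlj := hj1.2
  have huj := hj2.2
  simp only [he] at hli hui hlj huj
  have k1 := key_lemma hS hl hu hlmin humax hij hlj huj
  have k2 := key_lemma hS hl hu hlmin humax hij.symm hli hui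
  linarith
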